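/- Let $A$ be a commutative Noetherian ring with $2 \in A^\times$, equipped with a ring involution $*$. Then the fixed subring $A^+ = \{a \in A : a^* = a\}$ is a Noetherian ring. -/

import Mathlib

/-- The subring of elements fixed by a ring automorphism `σ` of `A`. -/
def fixedSubring {A : Type*} [CommRing A] (σ : A ≃+* A) : Subring A where
  carrier := {a | σ a = a}
  zero_mem' := by simp
  one_mem' := by simp
  add_mem' := by
    intro a b ha hb
    simp only [Set.mem_setOf_eq] at *
    rw [map_add, ha, hb]
  neg_mem' := by
    intro a ha
    simp only [Set.mem_setOf_eq] at *
    rw [map_neg, ha]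
  mul_mem' := by
    intro a b ha hb
    simp only [Set.mem_setOf_eq] at *
    rw [map_mul, ha, hb]

/-- Let `A` be a commutative Noetherian ring with `2 ∈ Aˣ`, equipped with a
ring involution `σ`.  Then the fixed subring `A⁺ = {a | σ a = a}` is Noetherian. -/
theorem stmt_15 {A : Type*} [CommRing A] [IsNoetherianRing A] (h2 : IsUnit (2 : A))
    (σ : A ≃+* A) (hσ : ∀ a : A, σ (σ a) = a) :
    IsNoetherianRing (fixedSubring σ) := by
  classical
  set R := fixedSubring σ with hR
  set f : R →+* A := R.subtype with hf
  -- an element v with 2 * v = 1 and σ v = v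
  obtain ⟨u, hu⟩ := h2
  set v : A := ↑u⁻¹ with hv
  have h2v : 2 * v = 1 := by rw [← hu, hv]; exact u.mul_inv
  have hσ2 : σ (2 : A) = 2 := by
    rw [show (2:A) = 1 + 1 from one_add_one_eq_two.symm, map_add, map_one]
  have hσv : σ v = v := by
    have h1 : 2 * σ v = 1 := by
      have := congrArg σ h2v
      rwa [map_mul, hσ2, map_one] at this
    calc σ v = 1 * σ v := (one_mul _).symm
      _ = (2 * v) * σ v := by rw [h2v]
      _ = v * (2 * σ v) := by ring
      _ = v := by rw [h1, mul_one]
  -- the averaging projection π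
  set π : A → A := fun a => v * (a + σ a) with hπ
  have hπadd : ∀ a b, π (a + b) = π a + π b := by
    intro a b; simp only [hπ, map_add]; ring
  have hπfix : ∀ a, σ a = a → π a = a := by
    intro a ha
    simp only [hπ, ha]
    calc v * (a + a) = (2 * v) * a := by ring
      _ = a := by rw [h2v, one_mul]
  have hσπ : ∀ a, σ (π a) = π a := by
    intro a
    simp only [hπ, map_mul, map_add, hσv, hσ a]
    ring
  have hπmul : ∀ r a : A, σ a = a → π (r * a) = π r * a := by
    intro r a ha
    simp only [hπ, map_mul, ha]
    ring
  -- key: comap f (map f I) ≤ I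
  have key : ∀ I : Ideal R, Ideal.comap f (Ideal.map f I) ≤ I := by
    intro I x hx
    have hx' : (x : A) ∈ Ideal.span (f '' (I : Set R)) := hx
    rw [Ideal.span, Submodule.mem_span_set'] at hx'
    obtain ⟨n, r, g, hsum⟩ := hx'
    -- choose preimages in I for the generators
    have hg : ∀ i, ∃ c : R, c ∈ I ∧ (c : A) = (g i : A) := by
      intro i
      obtain ⟨c, hc, hc'⟩ := (g i).2
      exact ⟨c, hc, hc'⟩
    choose c hcI hcval using hg
    have hfixc : ∀ i, σ ((g i : A)) = (g i : A) := by
      intro i; rw [← hcval i]; exact (c i).2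
    -- x = π x = ∑ π (r i) * c i, an element of I
    have hπx : π (x : A) = (x : A) := hπfix _ x.2
    have hπsum : π (x : A) = ∑ i, π (r i) * (c i : A) := by
      rw [← hsum]
      rw [show π (∑ i, r i • (g i : A)) = ∑ i, π (r i • (g i : A)) by
        classical
        induction (Finset.univ : Finset (Fin n)) using Finset.induction with
        | empty => simp [hπ]
        | insert _ _ hni ih => rw [Finset.sum_insert hni, Finset.sum_insert hni, hπadd, ih]]
      refine Finset.sum_congr rfl fun i _ => ?_
      rw [smul_eq_mul, hπmul _ _ (hfixc i), hcval i]
    set y : R := ∑ i, (⟨π (r i), hσπ (r i)⟩ : R) * c i with hy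
    have hyI : y ∈ I := Ideal.sum_mem I fun i _ => Ideal.mul_mem_left I _ (hcI i)
    have hxy : x = y := by
      apply Subtype.ext
      rw [← hπx, hπsum, hy]
      push_cast
      rfl
    rw [hxy]; exact hyI
  -- the order embedding of ideals
  have hle : ∀ I J : Ideal R, Ideal.map f I ≤ Ideal.map f J ↔ I ≤ J := by
    intro I J
    constructor
    · intro h
      calc I ≤ Ideal.comap f (Ideal.map f I) := Ideal.le_comap_map
        _ ≤ Ideal.comap f (Ideal.map f J) := Ideal.comap_mono h
        _ ≤ J := key J
    · exact Ideal.map_mono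
  let emb : Ideal R ↪o Ideal A := OrderEmbedding.ofMapLEIff (Ideal.map f) hle
  rw [isNoetherianRing_iff, isNoetherian_iff]
  have hwf : WellFounded ((· > ·) : Ideal A → Ideal A → Prop) := by
    rw [← isNoetherian_iff]
    exact inferInstance
  exact (RelEmbedding.mk emb.toEmbedding (by
    intro I J
    exact ⟨fun h => lt_of_le_of_ne ((hle J I).mp h.le) (fun e => h.ne (congrArg _ e)),
           fun h => lt_of_le_of_ne ((hle J I).mpr h.le)
             (fun e => h.ne (emb.injective e))⟩)).wellFounded hwf
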